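/- Let Ω ⊂ ℂ be a bounded simply connected domain whose boundary Γ admits a Schwarz function S (holomorphic in a neighborhood of Γ with S(z) = conj(z) on Γ), and suppose S extends meromorphically to Ω with a pole of order k ≥ 1 at a point z₀ ∈ Ω, z₀ ≠ 0. If a polynomial p of degree n − 1 (with antiderivative P of degree n) is the best approximation to conj(z) in A²(Ω), so that z·S(z) = P(z) + P#(S(z)) on Γ (where P#(w) = conj(P(conj(w)))), then n ≤ 1; i.e., the best approximation is constant. -/

import Mathlib

open MeasureTheory Complex Polynomial

/-- If the boundary of a bounded simply connected domain `Ω` admits a Schwarz function `S`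
which extends meromorphically to `Ω` with a pole of order `k ≥ 1` at `z₀ ∈ Ω`, `z₀ ≠ 0`, and a
polynomial `p` (with antiderivative `P` of degree `n`) is the best approximation to `conj z`
in `A²(Ω)`, so that `z * S z = P z + P#(S z)` on `∂Ω`, then `n ≤ 1`. -/
theorem schwarz_pole_forces_constant_best_approx
    (Ω : Set ℂ) (hΩopen : IsOpen Ω) (hΩconn : IsConnected Ω)
    (hΩbdd : Bornology.IsBounded Ω) (hΩsc : SimplyConnectedSpace Ω)
    (S : ℂ → ℂ) (U : Set ℂ) (hUopen : IsOpen U) (hU : frontier Ω ⊆ U)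
    (hSU : DifferentiableOn ℂ S U)
    (hSchwarz : ∀ z ∈ frontier Ω, S z = (starRingEnd ℂ) z)
    (z₀ : ℂ) (hz₀ : z₀ ∈ Ω) (hz₀ne : z₀ ≠ 0) (k : ℕ) (hk : 1 ≤ k)
    (hSmero : DifferentiableOn ℂ S (Ω \ {z₀}))
    (hpole : ∃ g : ℂ → ℂ, AnalyticAt ℂ g z₀ ∧ g z₀ ≠ 0 ∧
      ∀ᶠ z in nhdsWithin z₀ {z₀}ᶜ, S z = g z / (z - z₀) ^ k)
    (p P : Polynomial ℂ) (n : ℕ) (hnP : P.natDegree = n) (hder : P.derivative = p)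
    (hdeg : p.natDegree = n - 1)
    (hpB : MemLp (fun z => p.eval z) 2 (volume.restrict Ω))
    (hbest : ∀ g : ℂ → ℂ, DifferentiableOn ℂ g Ω → MemLp g 2 (volume.restrict Ω) →
      ∫ z in Ω, ‖(starRingEnd ℂ) z - p.eval z‖ ^ 2 ≤ ∫ z in Ω, ‖(starRingEnd ℂ) z - g z‖ ^ 2)
    (hident : ∀ z ∈ frontier Ω,
      z * S z = P.eval z + (P.map (starRingEnd ℂ)).eval (S z)) :
    n ≤ 1 := by
  by_contra hn1
  push_neg at hn1
  have hn : 2 ≤ n := hn1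
  obtain ⟨g, hg, hg0, hgev⟩ := hpole
  set Q : Polynomial ℂ := P.map (starRingEnd ℂ) with hQdef
  have hQdeg : Q.natDegree < n + 1 := by
    have := Polynomial.natDegree_map_le (f := starRingEnd ℂ) (p := P)
    rw [← hQdef] at this
    omega
  -- the connected component of Ω ∪ U containing Ω
  obtain ⟨x₀, hx₀⟩ := hΩconn.nonempty
  set C : Set ℂ := connectedComponentIn (Ω ∪ U) x₀ with hCdef
  have hOU : IsOpen (Ω ∪ U) := hΩopen.union hUopen
  have hCopen : IsOpen C := hOU.connectedComponentIn
  have hΩC : Ω ⊆ C :=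
    hΩconn.isPreconnected.subset_connectedComponentIn hx₀ Set.subset_union_left
  have hCsub : C ⊆ Ω ∪ U := connectedComponentIn_subset _ _
  have hCconn : IsPreconnected C := isPreconnected_connectedComponentIn
  have hfrC : frontier Ω ⊆ C := by
    intro w hw
    have hwU : w ∈ Ω ∪ U := Or.inr (hU hw)
    have h1 : IsOpen (connectedComponentIn (Ω ∪ U) w) := hOU.connectedComponentIn
    have hwmem : w ∈ connectedComponentIn (Ω ∪ U) w := mem_connectedComponentIn hwU
    have hwcl : w ∈ closure Ω := frontier_subset_closure hw
    obtain ⟨y, hyc, hyΩ⟩ :=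
      mem_closure_iff_nhds.mp hwcl _ (h1.mem_nhds hwmem)
    have e1 := connectedComponentIn_eq hyc
    have e2 := connectedComponentIn_eq (hΩC hyΩ)
    rw [hCdef, e2, ← e1]
    exact hwmem
  -- S is analytic on C away from z₀
  have hSan : ∀ x ∈ C, x ≠ z₀ → AnalyticAt ℂ S x := by
    intro x hx hxne
    rcases hCsub hx with hxΩ | hxU
    · exact hSmero.analyticAt
        (((hΩopen.sdiff isClosed_singleton)).mem_nhds ⟨hxΩ, hxne⟩)
    · exact hSU.analyticAt (hUopen.mem_nhds hxU)
  -- auxiliary functions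
  set H : ℂ → ℂ := fun z => z * g z * (z - z₀) ^ ((n - 1) * k)
      - (z - z₀) ^ (n * k) * P.eval z
      - ∑ i ∈ Finset.range (n + 1), Q.coeff i * g z ^ i * (z - z₀) ^ ((n - i) * k)
    with hHdef
  set F : ℂ → ℂ := fun z => if z = z₀ then H z₀
      else (z - z₀) ^ (n * k) * (z * S z - P.eval z - Q.eval (S z)) with hFdef
  -- key algebraic identity
  have key : ∀ z : ℂ, z ≠ z₀ → ∀ i ≤ n,
      (z - z₀) ^ (n * k) * (g z / (z - z₀) ^ k) ^ i = g z ^ i * (z - z₀) ^ ((n - i) * k) := by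
    intro z hz i hi
    have hd : z - z₀ ≠ 0 := sub_ne_zero.mpr hz
    rw [div_pow, ← pow_mul]
    rw [show n * k = k * i + (n - i) * k by
      rw [mul_comm k i, ← add_mul]; congr 1; omega]
    rw [pow_add]
    field_simp
  have heq : ∀ z : ℂ, z ≠ z₀ → S z = g z / (z - z₀) ^ k →
      (z - z₀) ^ (n * k) * (z * S z - P.eval z - Q.eval (S z)) = H z := by
    intro z hz hS
    rw [hS, Polynomial.eval_eq_sum_range' hQdeg]
    rw [mul_sub, mul_sub, Finset.mul_sum]
    simp only [hHdef]
    congr 1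
    · congr 1
      rw [show (z - z₀) ^ (n * k) * (z * (g z / (z - z₀) ^ k))
            = z * ((z - z₀) ^ (n * k) * (g z / (z - z₀) ^ k) ^ 1) by ring,
          key z hz 1 (by omega)]
      ring
    · refine Finset.sum_congr rfl fun i hi => ?_
      have hi' : i ≤ n := by
        have := Finset.mem_range.mp hi; omega
      rw [show (z - z₀) ^ (n * k) * (Q.coeff i * (g z / (z - z₀) ^ k) ^ i)
            = Q.coeff i * ((z - z₀) ^ (n * k) * (g z / (z - z₀) ^ k) ^ i) by ring,
          key z hz i hi']
      ring
  -- H is analytic at z₀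
  have hHan : AnalyticAt ℂ H z₀ := by
    have h1 : AnalyticAt ℂ (fun z : ℂ => z - z₀) z₀ :=
      (analyticAt_id.sub analyticAt_const)
    have hP : AnalyticAt ℂ (fun z : ℂ => P.eval z) z₀ :=
      (P.differentiable).analyticAt z₀
    refine AnalyticAt.sub (AnalyticAt.sub ?_ ?_) ?_
    · exact (analyticAt_id.mul hg).mul (h1.pow _)
    · exact (h1.pow _).mul hP
    · exact Finset.analyticAt_fun_sum _ fun i _ =>
        (analyticAt_const.mul (hg.pow _)).mul (h1.pow _)
  -- F is analytic on C
  have hFan : AnalyticOnNhd ℂ F C := by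
    intro x hx
    rcases eq_or_ne x z₀ with rfl | hxne
    · refine hHan.congr ?_
      have h1 : ∀ᶠ z in nhds x, z ∈ ({x}ᶜ : Set ℂ) → S z = g z / (z - x) ^ k :=
        eventually_nhdsWithin_iff.mp hgev
      filter_upwards [h1] with z hz
      rcases eq_or_ne z x with rfl | hzne
      · simp [hFdef]
      · have hS := hz hzne
        simp only [hFdef, if_neg hzne]
        exact (heq z hzne hS).symm
    · have hSx := hSan x hx hxne
      have hax : AnalyticAt ℂ
          (fun z => (z - z₀) ^ (n * k) * (z * S z - P.eval z - Q.eval (S z))) x := by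
        have h1 : AnalyticAt ℂ (fun z : ℂ => z - z₀) x :=
          (analyticAt_id.sub analyticAt_const)
        have hP : AnalyticAt ℂ (fun z : ℂ => P.eval z) x :=
          (P.differentiable).analyticAt x
        have hQS : AnalyticAt ℂ (fun z => Q.eval (S z)) x :=
          ((Q.differentiable).analyticAt (S x)).comp hSx
        exact (h1.pow _).mul (((analyticAt_id.mul hSx).sub hP).sub hQS)
      refine hax.congr ?_
      filter_upwards [isOpen_compl_singleton.mem_nhds hxne] with z hz
      simp only [hFdef, if_neg (Set.mem_compl_singleton_iff.mp hz)]
  -- F vanishes on the frontier of Ω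
  have hF0fr : ∀ z ∈ frontier Ω, F z = 0 := by
    intro z hz
    have hzne : z ≠ z₀ := by
      intro h
      have h2 := hz.2
      rw [hΩopen.interior_eq, h] at h2
      exact h2 hz₀
    have := hident z hz
    simp only [hFdef, if_neg hzne]
    rw [show z * S z - P.eval z - Q.eval (S z) = 0 by rw [this]; ring]
    ring
  -- the frontier of Ω is infinite
  have hne : ((closure Ω)ᶜ : Set ℂ).Nonempty := by
    rw [Set.nonempty_compl]
    intro h
    have hb : Bornology.IsBounded (Set.univ : Set ℂ) := h ▸ hΩbdd.closure
    exact (not_compactSpace_iff.mpr inferInstance)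
      (Metric.compactSpace_iff_isBounded_univ.mpr hb)
  have hfr_inf : (frontier Ω).Infinite := by
    intro hfin
    have hrank : 1 < Module.rank ℝ ℂ := by
      rw [rank_real_complex]; norm_num
    have hconn : IsConnected ((frontier Ω)ᶜ : Set ℂ) :=
      (hfin.countable).isConnected_compl_of_one_lt_rank hrank
    have hcover : ((frontier Ω)ᶜ : Set ℂ) ⊆ Ω ∪ (closure Ω)ᶜ := by
      intro z hz
      by_cases h : z ∈ closure Ω
      · left
        by_contra h'
        exact hz ⟨h, by rwa [hΩopen.interior_eq]⟩
      · right; exact h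
    have hdisj : Disjoint Ω ((closure Ω)ᶜ : Set ℂ) :=
      (disjoint_compl_right).mono_left subset_closure
    rcases hconn.isPreconnected.subset_or_subset hΩopen
        isClosed_closure.isOpen_compl hdisj hcover with h | h
    · obtain ⟨z, hzc⟩ := hne
      have hzfr : z ∈ ((frontier Ω)ᶜ : Set ℂ) := fun hmem =>
        hzc (frontier_subset_closure hmem)
      exact hzc (subset_closure (h hzfr))
    · have hx₀fr : x₀ ∈ ((frontier Ω)ᶜ : Set ℂ) := fun hmem => by
        have := hmem.2
        rw [hΩopen.interior_eq] at this
        exact this hx₀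
      exact (h hx₀fr) (subset_closure hx₀)
  -- accumulation point of the frontier
  obtain ⟨w, hwK, hwacc⟩ := hfr_inf.exists_accPt_of_subset_isCompact
    hΩbdd.isCompact_closure frontier_subset_closure
  have hwfreq : ∃ᶠ y in nhds w, y ≠ w ∧ y ∈ frontier Ω :=
    accPt_iff_frequently.mp hwacc
  have hwfr : w ∈ frontier Ω := by
    rw [← isClosed_frontier.closure_eq]
    exact mem_closure_iff_frequently.mpr (hwfreq.mono fun y hy => hy.2)
  -- F vanishes frequently near w
  have hfreq : ∃ᶠ z in nhdsWithin w ({w}ᶜ : Set ℂ), F z = 0 := by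
    rw [frequently_nhdsWithin_iff]
    exact hwfreq.mono fun y hy => ⟨hF0fr y hy.2, hy.1⟩
  -- identity principle
  have hF0 : Set.EqOn F 0 C :=
    hFan.eqOn_zero_of_preconnected_of_frequently_eq_zero hCconn (hfrC hwfr) hfreq
  have hFz₀0 : F z₀ = 0 := hF0 (hΩC hz₀)
  have hFz₀ : F z₀ = H z₀ := if_pos rfl
  -- compute H z₀
  have hQn : Q.coeff n ≠ 0 := by
    have hPne : P ≠ 0 := by
      intro h
      rw [h] at hnP
      simp at hnP
      omega
    rw [hQdef, Polynomial.coeff_map]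
    simp only [ne_eq, _root_.map_eq_zero]
    rw [← hnP, Polynomial.coeff_natDegree]
    exact Polynomial.leadingCoeff_ne_zero.mpr hPne
  have hHz₀ : H z₀ = -(Q.coeff n * g z₀ ^ n) := by
    simp only [hHdef, sub_self]
    rw [zero_pow (Nat.mul_ne_zero (by omega) (by omega)),
        zero_pow (Nat.mul_ne_zero (by omega) (by omega))]
    rw [Finset.sum_eq_single n]
    · simp
    · intro b hb hbne
      have hb' : b < n + 1 := Finset.mem_range.mp hb
      rw [zero_pow (Nat.mul_ne_zero (by omega) (by omega))]
      ring
    · intro h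
      exact absurd (Finset.self_mem_range_succ n) h
  rw [hFz₀, hHz₀] at hFz₀0
  exact (mul_ne_zero hQn (pow_ne_zero n hg0)) (neg_eq_zero.mp hFz₀0)
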